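/- Let α > 0, θ = arctan α, t ∈ (0, π/(2α)), P, Q ∈ ℝ, and b = α cot(θ + αt). With P_t = cos(αt)P + iα sin(αt)Q, Q_t = (i/α)sin(αt)P + cos(αt)Q, and w = cos(αt)x + (i/α)sin(αt)p, the following identity of functions of (x,p) ∈ ℝ² holds: -iP_t(w - Q_t) - (b/2)(w - Q_t)² + C(t,P,Q) = -iP(x-Q) + ( -cos θ sin(αt)(p-P)² - sin θ cos(αt)(x-Q)² - 2i cos θ sin(αt)(x-Q)(p-P) )/(2 sin(αt+θ)), where C(t,P,Q) = -∫₀ᵗ (L_H(p_{is},x_{is}) - L_H(P_{is},Q_{is})) ds is evaluated using L_H(p,x)=(1/2)(p²+α²x²), p_{is},x_{is} the complexified flow applied to (p,x), and the explicit formula ∫₀ᵗ L_H(P_{is},Q_{is})ds = (1/(4α))sin(2αt)(P²+α²Q²) + i sin²(αt)PQ. -/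

import Mathlib

open Real MeasureTheory intervalIntegral

theorem key (a c s cθ d P Q xx pp J : ℂ) (hJ : J^2 = -1) (hpy : s^2+c^2=1)
    (hdd : d = s + a*c) (ha : a ≠ 0) (hcθ : cθ ≠ 0) (hd0 : d ≠ 0) :
    (-J)*(c*P + J*a*s*Q)*((c*xx + J/a*s*pp) - (J/a*s*P + c*Q))
    - ((a*(c - a*s)/d)/2) * ((c*xx + J/a*s*pp) - (J/a*s*P + c*Q))^2
    + -(( (1/(4*a)*(2*s*c)*(pp^2+a^2*xx^2)) + J*(s^2*pp*xx) )
        - ( (1/(4*a)*(2*s*c)*(P^2+a^2*Q^2)) + J*(s^2*P*Q) ))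
    = -J*P*(xx-Q) + (-(cθ*s)*(pp-P)^2 - (a*cθ*c)*(xx-Q)^2
        - 2*J*(cθ*s)*(xx-Q)*(pp-P))/(2*(cθ*d)) := by
  have h8 : a * (d * 2 * a ^ 2) * (4 * a) ≠ 0 := by
    simp [ha, hd0]
  field_simp [ha, hcθ, hd0]

  linear_combination ((-8*J*c^2*a*P*xx) + (-8*J^2*s*c*a^2*Q*xx) + (-8*J^2*s*c*P*pp) + (-8*J^3*s^2*a*Q*pp) + (8*J^2*s*c*P^2) + (8*J^3*s^2*a*P*Q) + (8*J*c^2*a*P*Q) + (8*J^2*s*c*a^2*Q^2) + (-4*s*c*pp^2) + (-4*s*c*a^2*xx^2) + (-8*J*s^2*a*xx*pp) + (4*s*c*P^2) + (4*s*c*a^2*Q^2) + (8*J*s^2*a*P*Q) + (8*J*a*P*xx) + (-8*J*a*P*Q)) * hdd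
    + ((-4*s^2*c*pp^2) + (4*s^3*a*pp^2) + (-8*s^3*a*P*pp) + (4*s^2*c*P^2) + (4*s^3*a*P^2) + (-8*s^2*c*a^2*Q*xx) + (-8*s*c^2*a^3*Q*xx) + (-8*s*c^2*a*P*pp) + (-8*J*s^3*a*Q*pp) + (-8*J*s^2*c*a^2*Q*pp) + (8*s*c^2*a*P^2) + (8*J*s^3*a*P*Q) + (8*J*s^2*c*a^2*P*Q) + (8*s^2*c*a^2*Q^2) + (8*s*c^2*a^3*Q^2)) * hJ
    + ((-8*J*c*a^2*P*xx) + (8*J*c*a^2*P*Q) + (-4*s*a*pp^2) + (8*s*a*P*pp) + (-4*s*a*P^2) + (-4*c*a^2*xx^2) + (-8*J*s*a*xx*pp) + (-4*c*a^2*Q^2) + (8*c*a^2*Q*xx) + (8*J*s*a*Q*pp)) * hpy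



set_option maxHeartbeats 2000000 in
theorem statement19 (α t P Q : ℝ) (hα : 0 < α)
    (ht : t ∈ Set.Ioo 0 (π / (2 * α))) :
    ∀ x p : ℝ,
      let θ := Real.arctan α
      let b : ℂ := (α * Real.cos (θ + α * t) / Real.sin (θ + α * t) : ℝ)
      let Pt : ℂ := (Real.cos (α * t) : ℂ) * P + Complex.I * α * Real.sin (α * t) * Q
      let Qt : ℂ := (Complex.I / α) * Real.sin (α * t) * P + (Real.cos (α * t) : ℂ) * Q
      let w : ℂ := (Real.cos (α * t) : ℂ) * x + (Complex.I / α) * Real.sin (α * t) * p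
      let C : ℂ :=
        -((∫ s in (0:ℝ)..t,
            (1 / 2 : ℂ) *
              (((Real.cos (α * s) : ℂ) * p + Complex.I * α * Real.sin (α * s) * x) ^ 2
                + (α : ℂ) ^ 2 *
                  ((Complex.I / α) * Real.sin (α * s) * p
                    + (Real.cos (α * s) : ℂ) * x) ^ 2))
          - (((1 / (4 * α) * Real.sin (2 * α * t) * (P ^ 2 + α ^ 2 * Q ^ 2) : ℝ) : ℂ)
              + Complex.I * (Real.sin (α * t) ^ 2 * P * Q : ℝ)))
      (-Complex.I * Pt * (w - Qt) - (b / 2) * (w - Qt) ^ 2 + C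
        = -Complex.I * P * ((x : ℂ) - Q)
          + (-(Real.cos θ * Real.sin (α * t) : ℂ) * ((p : ℂ) - P) ^ 2
              - (Real.sin θ * Real.cos (α * t) : ℂ) * ((x : ℂ) - Q) ^ 2
              - 2 * Complex.I * (Real.cos θ * Real.sin (α * t) : ℂ)
                  * ((x : ℂ) - Q) * ((p : ℂ) - P))
            / (2 * (Real.sin (α * t + θ) : ℂ))) := by
  intro x p θ b Pt Qt w C
  have hα0 : (α : ℂ) ≠ 0 := by exact_mod_cast hα.ne'
  have ht0 : 0 < t := ht.1
  have hat0 : 0 < α * t := mul_pos hα ht0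
  have hat : α * t < π / 2 := by
    have h2 : α * t < α * (π / (2 * α)) := mul_lt_mul_of_pos_left ht.2 hα
    have h3 : α * (π / (2 * α)) = π / 2 := by field_simp
    linarith
  have hc : 0 < Real.cos (α * t) :=
    Real.cos_pos_of_mem_Ioo ⟨by linarith [Real.pi_pos], hat⟩
  have hs : 0 < Real.sin (α * t) :=
    Real.sin_pos_of_pos_of_lt_pi hat0 (by linarith [Real.pi_pos])
  have hcθ : 0 < Real.cos (Real.arctan α) := Real.cos_arctan_pos α
  have hsθR : Real.sin (Real.arctan α) = α * Real.cos (Real.arctan α) := by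
    rw [Real.sin_arctan, Real.cos_arctan]; ring
  have hDpos : 0 < Real.sin (α * t) + α * Real.cos (α * t) := by positivity
  have hDeq : Real.sin (α * t + Real.arctan α)
      = Real.cos (Real.arctan α) * (Real.sin (α * t) + α * Real.cos (α * t)) := by
    rw [Real.sin_add, hsθR]; ring
  have hbR : α * Real.cos (Real.arctan α + α * t) / Real.sin (Real.arctan α + α * t)
      = α * (Real.cos (α * t) - α * Real.sin (α * t))
          / (Real.sin (α * t) + α * Real.cos (α * t)) := by
    rw [Real.cos_add, Real.sin_add, hsθR,
      div_eq_div_iff (by nlinarith [mul_pos (mul_pos hα hcθ) hc, mul_pos hcθ hs]) hDpos.ne']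
    ring
  have hptw : ∀ s : ℝ,
      (1 / 2 : ℂ) *
        (((Real.cos (α * s) : ℂ) * p + Complex.I * α * Real.sin (α * s) * x) ^ 2
          + (α : ℂ) ^ 2 *
            ((Complex.I / α) * Real.sin (α * s) * p
              + (Real.cos (α * s) : ℂ) * x) ^ 2)
      = ((1/2*(p^2+α^2*x^2)*Real.cos (2*α*s) : ℝ) : ℂ)
        + ((α*p*x*Real.sin (2*α*s) : ℝ) : ℂ) * Complex.I := by
    intro s
    have h2c : Real.cos (2*α*s) = 2*Real.cos (α*s)^2 - 1 := by
      rw [show 2*α*s = 2*(α*s) by ring, Real.cos_two_mul]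
    have h2s : Real.sin (2*α*s) = 2*Real.sin (α*s)*Real.cos (α*s) := by
      rw [show 2*α*s = 2*(α*s) by ring, Real.sin_two_mul]
    have hpy : (Complex.sin (α*s))^2 + (Complex.cos (α*s))^2 = 1 :=
      Complex.sin_sq_add_cos_sq _
    rw [h2c, h2s]
    push_cast
    field_simp
    linear_combination (-((p:ℂ)^2+(α:ℂ)^2*(x:ℂ)^2)) * hpy
      + (((p:ℂ)^2+(α:ℂ)^2*(x:ℂ)^2)*(Complex.sin (α*s))^2) * Complex.I_sq
  have hiv : (∫ s in (0:ℝ)..t,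
        (1 / 2 : ℂ) *
          (((Real.cos (α * s) : ℂ) * p + Complex.I * α * Real.sin (α * s) * x) ^ 2
            + (α : ℂ) ^ 2 *
              ((Complex.I / α) * Real.sin (α * s) * p
                + (Real.cos (α * s) : ℂ) * x) ^ 2))
      = ((1 / (4 * α) * Real.sin (2 * α * t) * (p ^ 2 + α ^ 2 * x ^ 2) : ℝ) : ℂ)
        + Complex.I * ((Real.sin (α * t) ^ 2 * p * x : ℝ) : ℂ) := by
    simp only [hptw]
    have h2α : (2*α) ≠ 0 := by positivity
    have hci : ∫ s in (0:ℝ)..t, Real.cos (2*α*s) = Real.sin (2*α*t)/(2*α) := by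
      rw [intervalIntegral.integral_comp_mul_left Real.cos h2α]
      simp [integral_cos, smul_eq_mul]
      ring
    have hsi : ∫ s in (0:ℝ)..t, Real.sin (2*α*s) = (1 - Real.cos (2*α*t))/(2*α) := by
      rw [intervalIntegral.integral_comp_mul_left Real.sin h2α]
      simp [integral_sin, smul_eq_mul]
      ring
    have hint1 : IntervalIntegrable (fun s : ℝ => ((1/2*(p^2+α^2*x^2)*Real.cos (2*α*s) : ℝ) : ℂ)) volume 0 t := by
      apply Continuous.intervalIntegrable; continuity
    have hint2 : IntervalIntegrable (fun s : ℝ => ((α*p*x*Real.sin (2*α*s) : ℝ) : ℂ) * Complex.I) volume 0 t := by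
      apply Continuous.intervalIntegrable; continuity
    rw [intervalIntegral.integral_add hint1 hint2, intervalIntegral.integral_mul_const,
      intervalIntegral.integral_ofReal, intervalIntegral.integral_ofReal,
      intervalIntegral.integral_const_mul, intervalIntegral.integral_const_mul, hci, hsi]
    have hc2 : Real.cos (2*α*t) = 1 - 2*Real.sin (α*t)^2 := by
      rw [show 2*α*t = 2*(α*t) by ring, Real.cos_two_mul, ← Real.sin_sq_add_cos_sq (α*t)]
      ring
    rw [hc2]
    push_cast
    field_simp
    ring
  have hpyR : Real.sin (α*t)^2 + Real.cos (α*t)^2 = 1 := Real.sin_sq_add_cos_sq _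
  have h2t : Real.sin (2*α*t) = 2*Real.sin (α*t)*Real.cos (α*t) := by
    rw [show 2*α*t = 2*(α*t) by ring, Real.sin_two_mul]
  simp only [θ, b, Pt, Qt, w, C]
  rw [hiv, hbR, hDeq, hsθR, h2t]
  set cθ := Real.cos (Real.arctan α) with hcθdef
  set c := Real.cos (α*t) with hcdef
  set s := Real.sin (α*t) with hsdef
  have hpyC : (s:ℂ)^2 + (c:ℂ)^2 = 1 := by exact_mod_cast hpyR
  have hcθ0 : (cθ:ℂ) ≠ 0 := by exact_mod_cast hcθ.ne'
  have hD0 : (s:ℂ) + (α:ℂ)*(c:ℂ) ≠ 0 := by exact_mod_cast hDpos.ne'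
  push_cast
  linear_combination key (α:ℂ) (c:ℂ) (s:ℂ) (cθ:ℂ) ((s:ℂ)+(α:ℂ)*(c:ℂ)) (P:ℂ) (Q:ℂ)
    (x:ℂ) (p:ℂ) Complex.I Complex.I_sq hpyC rfl hα0 hcθ0 hD0
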